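/- Under Assumption 1 (d_θ(s) > 0 for all s ∈ S and all θ ∈ X), a policy θ* ∈ X of a finite Markov game under direct policy parameterization is a Nash equilibrium if and only if it is a first-order stationary policy. -/

import Mathlib

open scoped BigOperators

/-! Common framework for finite Markov games under direct policy
parameterization.  Agents are indexed by `Fin N`, the state space `S` and the
action spaces `A i` are finite.  A policy profile is `θ : ∀ i, S → A i → ℝ`,
feasible when each `θ i s` lies in the probability simplex. -/

section MGDefs

variable {N : ℕ} {S : Type} {A : Fin N → Type}
variable [Fintype S] [∀ i, Fintype (A i)]

/-- Joint policy `π_θ(a|s) = ∏ i, θ_i(a_i|s)` induced by the per-agent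
directly parameterized policies. -/
def jointPi (θ : ∀ i, S → A i → ℝ) : S → (∀ i, A i) → ℝ :=
  fun s a => ∏ i, θ i s (a i)

/-- Distribution of the state at time `t` under transition kernel `P`,
policy `π` and initial distribution `ρ`. -/
def stateDist {σ α : Type} [Fintype σ] [Fintype α] (P : σ → α → σ → ℝ)
    (π : σ → α → ℝ) (ρ : σ → ℝ) : ℕ → σ → ℝ
  | 0 => ρ
  | t + 1 => fun s' => ∑ s, ∑ a, stateDist P π ρ t s * π s a * P s a s'

/-- Expected discounted sum `E[∑ₜ γ^t f(s_t, a_t)]` of a state-action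
function `f`, under kernel `P`, policy `π`, and initial distribution `ρ`. -/
noncomputable def expDisc {σ α : Type} [Fintype σ] [Fintype α] (γ : ℝ)
    (P : σ → α → σ → ℝ) (π : σ → α → ℝ) (ρ : σ → ℝ) (f : σ → α → ℝ) : ℝ :=
  ∑' t : ℕ, γ ^ t * ∑ s, ∑ a, stateDist P π ρ t s * π s a * f s a

/-- Dirac (point-mass) distribution at `s`. -/
def dirac {σ : Type} [DecidableEq σ] (s : σ) : σ → ℝ :=
  fun s' => if s' = s then 1 else 0

/-- Value function `V^θ(s) = E[∑ₜ γ^t f(s_t,a_t) | π_θ, s_0 = s]`. -/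
noncomputable def valueV [DecidableEq S] (γ : ℝ) (P : S → (∀ i, A i) → S → ℝ)
    (θ : ∀ i, S → A i → ℝ) (f : S → (∀ i, A i) → ℝ) (s : S) : ℝ :=
  expDisc γ P (jointPi θ) (dirac s) f

/-- Total objective `J(θ) = E_{s₀ ∼ ρ}[∑ₜ γ^t f(s_t,a_t) | π_θ]`. -/
noncomputable def Jtot (γ : ℝ) (P : S → (∀ i, A i) → S → ℝ) (ρ : S → ℝ)
    (θ : ∀ i, S → A i → ℝ) (f : S → (∀ i, A i) → ℝ) : ℝ :=
  expDisc γ P (jointPi θ) ρ f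

/-- The feasible set `X = X_1 × ⋯ × X_N`, `X_i = Δ(A_i)^S`. -/
def feasible (θ : ∀ i, S → A i → ℝ) : Prop :=
  ∀ i, ∀ s, θ i s ∈ stdSimplex ℝ (A i)

/-- Discounted state-visitation measure
`d_θ(s) = (1-γ) E_{s₀∼ρ} ∑ₜ γ^t Pr^θ(s_t = s | s₀)`. -/
noncomputable def visit (γ : ℝ) (P : S → (∀ i, A i) → S → ℝ)
    (θ : ∀ i, S → A i → ℝ) (ρ : S → ℝ) (s : S) : ℝ :=
  (1 - γ) * ∑' t : ℕ, γ ^ t * stateDist P (jointPi θ) ρ t s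

end MGDefs

/-! ### Auxiliary development -/

set_option linter.unusedSectionVars false
set_option maxHeartbeats 1000000

section Generic
variable {σ α : Type} [Fintype σ] [Fintype α] [DecidableEq σ]
variable (P : σ → α → σ → ℝ) (π : σ → α → ℝ) (ρ : σ → ℝ)

lemma sum_P_one (hP : ∀ s a, P s a ∈ stdSimplex ℝ σ) (X : σ → α → ℝ) :
    ∑ s', ∑ s, ∑ a, X s a * P s a s' = ∑ s, ∑ a, X s a := by
  rw [Finset.sum_comm]
  refine Finset.sum_congr rfl fun s _ => ?_
  rw [Finset.sum_comm]
  refine Finset.sum_congr rfl fun a _ => ?_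
  rw [← Finset.mul_sum, (hP s a).2, mul_one]

lemma sd_nonneg (hP : ∀ s a, P s a ∈ stdSimplex ℝ σ) (hρ : ∀ s, 0 ≤ ρ s)
    (hπ : ∀ s a, 0 ≤ π s a) : ∀ t s, 0 ≤ stateDist P π ρ t s := by
  intro t
  induction t with
  | zero => exact hρ
  | succ t ih =>
      intro s'
      exact Finset.sum_nonneg fun s _ => Finset.sum_nonneg fun a _ =>
        mul_nonneg (mul_nonneg (ih s) (hπ s a)) ((hP s a).1 s')

lemma sd_abs_mass (hP : ∀ s a, P s a ∈ stdSimplex ℝ σ) {c M : ℝ}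
    (hM0 : 0 ≤ M) (hρ : ∑ s, |ρ s| ≤ c) (hM : ∀ s, ∑ a, |π s a| ≤ M) :
    ∀ t, ∑ s, |stateDist P π ρ t s| ≤ c * M ^ t := by
  intro t
  induction t with
  | zero => simpa [stateDist] using hρ
  | succ t ih =>
      have key : ∑ s', |stateDist P π ρ (t+1) s'| ≤ ∑ s, |stateDist P π ρ t s| * M := by
        have h1 : ∑ s', |stateDist P π ρ (t+1) s'|
            ≤ ∑ s', ∑ s, ∑ a, (|stateDist P π ρ t s| * |π s a|) * P s a s' := by
          refine Finset.sum_le_sum fun s' _ => ?_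
          refine (Finset.abs_sum_le_sum_abs _ _).trans ?_
          refine Finset.sum_le_sum fun s _ => ?_
          refine (Finset.abs_sum_le_sum_abs _ _).trans ?_
          refine Finset.sum_le_sum fun a _ => ?_
          rw [abs_mul, abs_mul, abs_of_nonneg ((hP s a).1 s')]
        rw [sum_P_one P hP] at h1
        refine h1.trans (Finset.sum_le_sum fun s _ => ?_)
        rw [← Finset.mul_sum]
        exact mul_le_mul_of_nonneg_left (hM s) (abs_nonneg _)
      calc ∑ s', |stateDist P π ρ (t+1) s'| ≤ ∑ s, |stateDist P π ρ t s| * M := key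
        _ = (∑ s, |stateDist P π ρ t s|) * M := by rw [Finset.sum_mul]
        _ ≤ (c * M ^ t) * M := mul_le_mul_of_nonneg_right ih hM0
        _ = c * M ^ (t+1) := by ring

lemma sd_mass_one (hP : ∀ s a, P s a ∈ stdSimplex ℝ σ)
    (hρ : ∑ s, ρ s = 1) (hπ : ∀ s, ∑ a, π s a = 1) :
    ∀ t, ∑ s, stateDist P π ρ t s = 1 := by
  intro t
  induction t with
  | zero => simpa [stateDist] using hρ
  | succ t ih =>
      have h : ∑ s', stateDist P π ρ (t+1) s' = ∑ s, ∑ a, stateDist P π ρ t s * π s a := by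
        show ∑ s', ∑ s, ∑ a, _ * P s a s' = _
        exact sum_P_one P hP _
      rw [h]
      calc ∑ s, ∑ a, stateDist P π ρ t s * π s a
          = ∑ s, stateDist P π ρ t s := by
            refine Finset.sum_congr rfl fun s _ => ?_
            rw [← Finset.mul_sum, hπ s, mul_one]
        _ = 1 := ih

lemma sd_lipschitz (π' : σ → α → ℝ) (hP : ∀ s a, P s a ∈ stdSimplex ℝ σ) {M D : ℝ}
    (hM0 : 0 ≤ M) (hD0 : 0 ≤ D) (hρ : ∑ s, |ρ s| ≤ 1)
    (hM : ∀ s, ∑ a, |π s a| ≤ M) (hM' : ∀ s, ∑ a, |π' s a| ≤ M)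
    (hD : ∀ s, ∑ a, |π s a - π' s a| ≤ D) :
    ∀ t, ∑ s, |stateDist P π ρ t s - stateDist P π' ρ t s| ≤ t * M ^ (t-1) * D := by
  intro t
  induction t with
  | zero => simp [stateDist]
  | succ t ih =>
      have key : ∑ s', |stateDist P π ρ (t+1) s' - stateDist P π' ρ (t+1) s'|
          ≤ M * ∑ s, |stateDist P π ρ t s - stateDist P π' ρ t s| + M ^ t * D := by
        have h1 : ∑ s', |stateDist P π ρ (t+1) s' - stateDist P π' ρ (t+1) s'|
            ≤ ∑ s', ∑ s, ∑ a, ((|stateDist P π ρ t s - stateDist P π' ρ t s| * |π s a|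
                + |stateDist P π' ρ t s| * |π s a - π' s a|)) * P s a s' := by
          refine Finset.sum_le_sum fun s' _ => ?_
          show |(∑ s, ∑ a, _) - (∑ s, ∑ a, _)| ≤ _
          rw [← Finset.sum_sub_distrib]
          refine (Finset.abs_sum_le_sum_abs _ _).trans ?_
          refine Finset.sum_le_sum fun s _ => ?_
          rw [← Finset.sum_sub_distrib]
          refine (Finset.abs_sum_le_sum_abs _ _).trans ?_
          refine Finset.sum_le_sum fun a _ => ?_
          have h2 : stateDist P π ρ t s * π s a * P s a s'
              - stateDist P π' ρ t s * π' s a * P s a s'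
              = ((stateDist P π ρ t s - stateDist P π' ρ t s) * π s a
                + stateDist P π' ρ t s * (π s a - π' s a)) * P s a s' := by ring
          rw [h2, abs_mul, abs_of_nonneg ((hP s a).1 s')]
          refine mul_le_mul_of_nonneg_right ?_ ((hP s a).1 s')
          refine (abs_add_le _ _).trans ?_
          rw [abs_mul, abs_mul]
        rw [sum_P_one P hP] at h1
        refine h1.trans ?_
        have h2 : ∀ s : σ, ∑ a, (|stateDist P π ρ t s - stateDist P π' ρ t s| * |π s a|
            + |stateDist P π' ρ t s| * |π s a - π' s a|)
            ≤ |stateDist P π ρ t s - stateDist P π' ρ t s| * M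
              + |stateDist P π' ρ t s| * D := by
          intro s
          rw [Finset.sum_add_distrib, ← Finset.mul_sum, ← Finset.mul_sum]
          exact add_le_add (mul_le_mul_of_nonneg_left (hM s) (abs_nonneg _))
            (mul_le_mul_of_nonneg_left (hD s) (abs_nonneg _))
        refine (Finset.sum_le_sum fun s _ => h2 s).trans ?_
        rw [Finset.sum_add_distrib, ← Finset.sum_mul, ← Finset.sum_mul]
        rw [mul_comm M]
        refine add_le_add le_rfl ?_
        refine mul_le_mul_of_nonneg_right ?_ hD0
        simpa using sd_abs_mass P π' ρ hP hM0 hρ hM' t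
      refine key.trans ?_
      cases t with
      | zero =>
          simp only [Nat.cast_zero, zero_mul, pow_zero] at ih ⊢
          have h0 : ∑ s, |stateDist P π ρ 0 s - stateDist P π' ρ 0 s| = 0 := by
            refine le_antisymm (by simpa using ih) (Finset.sum_nonneg fun s _ => abs_nonneg _)
          rw [h0]
          simp
      | succ u =>
          have h3 : M * ∑ s, |stateDist P π ρ (u+1) s - stateDist P π' ρ (u+1) s|
              ≤ M * ((u+1) * M ^ u * D) :=
            mul_le_mul_of_nonneg_left (by simpa using ih) hM0
          refine (add_le_add h3 le_rfl).trans ?_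
          have h4 : (((u:ℝ)+1)+1) * M ^ (u+1) * D = M * ((u+1) * M^u * D) + M^(u+1) * D := by ring
          simp only [Nat.add_sub_cancel]
          push_cast
          rw [h4]

lemma T_rearrange (d : σ → ℝ) (f : σ → α → ℝ) :
    ∑ s, ∑ a, d s * π s a * f s a = ∑ s, d s * ∑ a, π s a * f s a := by
  refine Finset.sum_congr rfl fun s _ => ?_
  rw [Finset.mul_sum]
  exact Finset.sum_congr rfl fun a _ => mul_assoc _ _ _

lemma weighted_bound {c M : ℝ} (hP : ∀ s a, P s a ∈ stdSimplex ℝ σ)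
    (hM0 : 0 ≤ M) (hρ : ∑ s, |ρ s| ≤ c) (hM : ∀ s, ∑ a, |π s a| ≤ M)
    (g : σ → ℝ) {G : ℝ} (hG0 : 0 ≤ G) (hg : ∀ s, |g s| ≤ G) (t : ℕ) :
    |∑ s, stateDist P π ρ t s * g s| ≤ c * M ^ t * G := by
  refine (Finset.abs_sum_le_sum_abs _ _).trans ?_
  have h1 : ∀ s : σ, |stateDist P π ρ t s * g s| ≤ |stateDist P π ρ t s| * G := by
    intro s
    rw [abs_mul]
    exact mul_le_mul_of_nonneg_left (hg s) (abs_nonneg _)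
  refine (Finset.sum_le_sum fun s _ => h1 s).trans ?_
  rw [← Finset.sum_mul]
  exact mul_le_mul_of_nonneg_right (sd_abs_mass P π ρ hP hM0 hρ hM t) hG0

end Generic
section Generic2
variable {σ α : Type} [Fintype σ] [Fintype α] [DecidableEq σ]
variable (γ : ℝ) (P : σ → α → σ → ℝ) (π : σ → α → ℝ) (ρ : σ → ℝ) (f : σ → α → ℝ)

lemma summable_geom_aux {u : ℕ → ℝ} {C x : ℝ} (hx0 : 0 ≤ x) (hx1 : x < 1)
    (h : ∀ t, |u t| ≤ C * x ^ t) : Summable u := by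
  refine Summable.of_abs (Summable.of_nonneg_of_le (fun t => abs_nonneg _) h ?_)
  exact (summable_geometric_of_lt_one hx0 hx1).mul_left C

lemma tsum_abs_le_geom_aux {u : ℕ → ℝ} {C x : ℝ} (hx0 : 0 ≤ x) (hx1 : x < 1)
    (h : ∀ t, |u t| ≤ C * x ^ t) : |∑' t, u t| ≤ C * (1 - x)⁻¹ := by
  have hs : Summable u := summable_geom_aux hx0 hx1 h
  have h2 : Summable fun t : ℕ => |u t| :=
    Summable.of_nonneg_of_le (fun t => abs_nonneg _) h
      ((summable_geometric_of_lt_one hx0 hx1).mul_left C)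
  calc |∑' t, u t| ≤ ∑' t, |u t| := by
        simpa [Real.norm_eq_abs] using norm_tsum_le_tsum_norm (f := u) (by simpa [Real.norm_eq_abs] using h2)
    _ ≤ ∑' t : ℕ, C * x ^ t :=
        Summable.tsum_le_tsum h h2 ((summable_geometric_of_lt_one hx0 hx1).mul_left C)
    _ = C * (1 - x)⁻¹ := by
        rw [tsum_mul_left, tsum_geometric_of_lt_one hx0 hx1]

lemma f_le_F (s : σ) (a : α) : |f s a| ≤ ∑ s', ∑ a', |f s' a'| := by
  calc |f s a| ≤ ∑ a', |f s a'| :=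
        Finset.single_le_sum (f := fun a' => |f s a'|) (fun _ _ => abs_nonneg _) (Finset.mem_univ a)
    _ ≤ ∑ s', ∑ a', |f s' a'| :=
        Finset.single_le_sum (f := fun s' => ∑ a', |f s' a'|)
          (fun _ _ => Finset.sum_nonneg fun _ _ => abs_nonneg _) (Finset.mem_univ s)

lemma F_nonneg : (0:ℝ) ≤ ∑ s', ∑ a', |f s' a'| :=
  Finset.sum_nonneg fun _ _ => Finset.sum_nonneg fun _ _ => abs_nonneg _

lemma pif_bound {M : ℝ} (hM : ∀ s, ∑ a, |π s a| ≤ M) (s : σ) :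
    |∑ a, π s a * f s a| ≤ M * (∑ s', ∑ a', |f s' a'|) := by
  refine (Finset.abs_sum_le_sum_abs _ _).trans ?_
  calc ∑ a, |π s a * f s a|
      ≤ ∑ a, |π s a| * (∑ s', ∑ a', |f s' a'|) := by
        refine Finset.sum_le_sum fun a _ => ?_
        rw [abs_mul]
        exact mul_le_mul_of_nonneg_left (f_le_F f s a) (abs_nonneg _)
    _ = (∑ a, |π s a|) * (∑ s', ∑ a', |f s' a'|) := by rw [Finset.sum_mul]
    _ ≤ M * (∑ s', ∑ a', |f s' a'|) :=
        mul_le_mul_of_nonneg_right (hM s) (F_nonneg f)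

lemma dirac_abs_sum (s0 : σ) : ∑ s, |dirac s0 s| ≤ 1 := by
  simp [dirac, apply_ite abs]

lemma dirac_sum (s0 : σ) : ∑ s, dirac s0 s = 1 := by simp [dirac]

lemma dirac_nonneg (s0 s : σ) : 0 ≤ dirac s0 s := by
  unfold dirac; split <;> norm_num

lemma expDisc_eq :
    expDisc γ P π ρ f = ∑' t, γ ^ t * ∑ s, stateDist P π ρ t s * ∑ a, π s a * f s a := by
  unfold expDisc
  exact tsum_congr fun t => by rw [T_rearrange]

lemma summable_main {c M G : ℝ} (hγ0 : 0 ≤ γ) (hP : ∀ s a, P s a ∈ stdSimplex ℝ σ)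
    (hM0 : 0 ≤ M) (hγM : γ * M < 1)
    (hρ : ∑ s, |ρ s| ≤ c) (hM : ∀ s, ∑ a, |π s a| ≤ M)
    (g : σ → ℝ) (hG0 : 0 ≤ G) (hg : ∀ s, |g s| ≤ G) :
    Summable (fun t : ℕ => γ ^ t * ∑ s, stateDist P π ρ t s * g s) := by
  refine summable_geom_aux (mul_nonneg hγ0 hM0) hγM (C := c * G) fun t => ?_
  rw [abs_mul, abs_pow, abs_of_nonneg hγ0, mul_pow]
  calc γ ^ t * |∑ s, stateDist P π ρ t s * g s|
      ≤ γ ^ t * (c * M ^ t * G) :=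
        mul_le_mul_of_nonneg_left (weighted_bound P π ρ hP hM0 hρ hM g hG0 hg t)
          (pow_nonneg hγ0 t)
    _ = c * G * (γ ^ t * M ^ t) := by ring

lemma sd_linear : ∀ t s', stateDist P π ρ t s' = ∑ s0, ρ s0 * stateDist P π (dirac s0) t s' := by
  intro t
  induction t with
  | zero =>
      intro s'
      show ρ s' = ∑ s0, ρ s0 * dirac s0 s'
      simp [dirac]
  | succ t ih =>
      intro s'
      show ∑ s, ∑ a, stateDist P π ρ t s * π s a * P s a s' = _
      calc ∑ s, ∑ a, stateDist P π ρ t s * π s a * P s a s'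
          = ∑ s, ∑ a, ∑ s0, ρ s0 * (stateDist P π (dirac s0) t s * π s a * P s a s') := by
            refine Finset.sum_congr rfl fun s _ => Finset.sum_congr rfl fun a _ => ?_
            rw [ih s, Finset.sum_mul, Finset.sum_mul]
            exact Finset.sum_congr rfl fun s0 _ => by ring
        _ = ∑ s, ∑ s0, ∑ a, ρ s0 * (stateDist P π (dirac s0) t s * π s a * P s a s') := by
            exact Finset.sum_congr rfl fun s _ => Finset.sum_comm
        _ = ∑ s0, ∑ s, ∑ a, ρ s0 * (stateDist P π (dirac s0) t s * π s a * P s a s') :=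
            Finset.sum_comm
        _ = ∑ s0, ρ s0 * stateDist P π (dirac s0) (t+1) s' := by
            refine Finset.sum_congr rfl fun s0 _ => ?_
            show _ = ρ s0 * ∑ s, ∑ a, stateDist P π (dirac s0) t s * π s a * P s a s'
            rw [Finset.mul_sum]
            exact Finset.sum_congr rfl fun s _ => by rw [Finset.mul_sum]

lemma sd_succ : ∀ t, stateDist P π ρ (t+1)
    = stateDist P π (fun s' => ∑ s, ∑ a, ρ s * π s a * P s a s') t := by
  intro t
  induction t with
  | zero => rfl
  | succ t ih =>
      funext s'
      show ∑ s, ∑ a, stateDist P π ρ (t+1) s * π s a * P s a s'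
        = ∑ s, ∑ a, stateDist P π (fun s' => ∑ s, ∑ a, ρ s * π s a * P s a s') t s * π s a * P s a s'
      rw [ih]

lemma expDisc_linear (hγ0 : 0 ≤ γ) (hγ1 : γ < 1) (hP : ∀ s a, P s a ∈ stdSimplex ℝ σ)
    (hπ0 : ∀ s a, 0 ≤ π s a) (hπ1 : ∀ s, ∑ a, π s a = 1) :
    expDisc γ P π ρ f = ∑ s0, ρ s0 * expDisc γ P π (dirac s0) f := by
  have hM : ∀ s, ∑ a, |π s a| ≤ 1 := by
    intro s
    rw [show ∑ a, |π s a| = ∑ a, π s a from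
      Finset.sum_congr rfl fun a _ => abs_of_nonneg (hπ0 s a), hπ1 s]
  have hg : ∀ s, |∑ a, π s a * f s a| ≤ (∑ s', ∑ a', |f s' a'|) := fun s => by
    simpa using pif_bound π f hM s
  rw [expDisc_eq]
  have hswap : ∀ t : ℕ, γ ^ t * ∑ s, stateDist P π ρ t s * ∑ a, π s a * f s a
      = ∑ s0, ρ s0 * (γ ^ t * ∑ s, stateDist P π (dirac s0) t s * ∑ a, π s a * f s a) := by
    intro t
    have h1 : ∑ s, stateDist P π ρ t s * ∑ a, π s a * f s a
        = ∑ s0, ρ s0 * ∑ s, stateDist P π (dirac s0) t s * ∑ a, π s a * f s a := by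
      calc ∑ s, stateDist P π ρ t s * ∑ a, π s a * f s a
          = ∑ s, ∑ s0, ρ s0 * (stateDist P π (dirac s0) t s * ∑ a, π s a * f s a) := by
            refine Finset.sum_congr rfl fun s _ => ?_
            rw [sd_linear P π ρ t s, Finset.sum_mul]
            exact Finset.sum_congr rfl fun s0 _ => mul_assoc _ _ _
        _ = ∑ s0, ∑ s, ρ s0 * (stateDist P π (dirac s0) t s * ∑ a, π s a * f s a) :=
            Finset.sum_comm
        _ = ∑ s0, ρ s0 * ∑ s, stateDist P π (dirac s0) t s * ∑ a, π s a * f s a := by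
            exact Finset.sum_congr rfl fun s0 _ => (Finset.mul_sum _ _ _).symm
    rw [h1, Finset.mul_sum]
    exact Finset.sum_congr rfl fun s0 _ => by ring
  rw [tsum_congr hswap]
  rw [Summable.tsum_finsetSum (fun s0 _ => ?_)]
  · exact Finset.sum_congr rfl fun s0 _ => by rw [tsum_mul_left, ← expDisc_eq]
  · refine Summable.mul_left _ ?_
    refine summable_main γ P π (dirac s0) hγ0 hP zero_le_one (by linarith)
      (dirac_abs_sum s0) hM _ (F_nonneg f) hg

noncomputable def Vv (γ : ℝ) (P : σ → α → σ → ℝ) (π : σ → α → ℝ) (f : σ → α → ℝ) (s : σ) : ℝ :=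
  expDisc γ P π (dirac s) f

lemma Vv_abs_le (hγ0 : 0 ≤ γ) (hγ1 : γ < 1) (hP : ∀ s a, P s a ∈ stdSimplex ℝ σ)
    (hπ0 : ∀ s a, 0 ≤ π s a) (hπ1 : ∀ s, ∑ a, π s a = 1) (s : σ) :
    |Vv γ P π f s| ≤ (∑ s', ∑ a', |f s' a'|) * (1 - γ)⁻¹ := by
  have hM : ∀ s, ∑ a, |π s a| ≤ 1 := by
    intro s
    rw [show ∑ a, |π s a| = ∑ a, π s a from
      Finset.sum_congr rfl fun a _ => abs_of_nonneg (hπ0 s a), hπ1 s]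
  have hg : ∀ s, |∑ a, π s a * f s a| ≤ (∑ s', ∑ a', |f s' a'|) := fun s => by
    simpa using pif_bound π f hM s
  rw [Vv, expDisc_eq]
  refine tsum_abs_le_geom_aux hγ0 hγ1 fun t => ?_
  rw [abs_mul, abs_pow, abs_of_nonneg hγ0]
  calc γ ^ t * |∑ s', stateDist P π (dirac s) t s' * ∑ a, π s' a * f s' a|
      ≤ γ ^ t * (1 * 1 ^ t * (∑ s', ∑ a', |f s' a'|)) := by
        refine mul_le_mul_of_nonneg_left ?_ (pow_nonneg hγ0 t)
        exact weighted_bound P π (dirac s) hP zero_le_one (dirac_abs_sum s) hM _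
          (F_nonneg f) hg t
    _ = (∑ s', ∑ a', |f s' a'|) * γ ^ t := by ring

lemma bellman (hγ0 : 0 ≤ γ) (hγ1 : γ < 1) (hP : ∀ s a, P s a ∈ stdSimplex ℝ σ)
    (hπ0 : ∀ s a, 0 ≤ π s a) (hπ1 : ∀ s, ∑ a, π s a = 1) (s : σ) :
    Vv γ P π f s = ∑ a, π s a * (f s a + γ * ∑ s', P s a s' * Vv γ P π f s') := by
  have hM : ∀ s, ∑ a, |π s a| ≤ 1 := by
    intro s
    rw [show ∑ a, |π s a| = ∑ a, π s a from
      Finset.sum_congr rfl fun a _ => abs_of_nonneg (hπ0 s a), hπ1 s]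
  have hg : ∀ s, |∑ a, π s a * f s a| ≤ (∑ s', ∑ a', |f s' a'|) := fun s => by
    simpa using pif_bound π f hM s
  have hsum : Summable (fun t : ℕ => γ ^ t * ∑ s', stateDist P π (dirac s) t s' * ∑ a, π s' a * f s' a) :=
    summable_main γ P π (dirac s) hγ0 hP zero_le_one (by linarith) (dirac_abs_sum s) hM _
      (F_nonneg f) hg
  have h0 : Vv γ P π f s = ∑' t : ℕ, γ ^ t * ∑ s', stateDist P π (dirac s) t s' * ∑ a, π s' a * f s' a := by
    rw [Vv, expDisc_eq]
  rw [h0, Summable.tsum_eq_zero_add hsum]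
  have hu0 : γ ^ 0 * ∑ s', stateDist P π (dirac s) 0 s' * ∑ a, π s' a * f s' a
      = ∑ a, π s a * f s a := by
    show γ ^ 0 * ∑ s', dirac s s' * ∑ a, π s' a * f s' a = _
    simp [dirac]
  rw [hu0]
  -- the tail
  set ρ' : σ → ℝ := fun s' => ∑ s1, ∑ a, dirac s s1 * π s1 a * P s1 a s' with hρ'
  have htail : ∀ t : ℕ, γ ^ (t+1) * ∑ s', stateDist P π (dirac s) (t+1) s' * ∑ a, π s' a * f s' a
      = γ * (γ ^ t * ∑ s', stateDist P π ρ' t s' * ∑ a, π s' a * f s' a) := by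
    intro t
    rw [sd_succ P π (dirac s) t, pow_succ]
    ring
  rw [tsum_congr htail, tsum_mul_left]
  have h2 : (∑' t : ℕ, γ ^ t * ∑ s', stateDist P π ρ' t s' * ∑ a, π s' a * f s' a)
      = ∑ s0, ρ' s0 * Vv γ P π f s0 := by
    rw [← expDisc_eq, expDisc_linear γ P π ρ' f hγ0 hγ1 hP hπ0 hπ1]
    rfl
  rw [h2]
  have hρ'eq : ∀ s0, ρ' s0 = ∑ a, π s a * P s a s0 := by
    intro s0
    rw [hρ']
    simp [dirac]
  calc ∑ a, π s a * f s a + γ * ∑ s0, ρ' s0 * Vv γ P π f s0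
      = ∑ a, π s a * f s a + γ * ∑ s0, ∑ a, π s a * P s a s0 * Vv γ P π f s0 := by
        rw [show ∑ s0, ρ' s0 * Vv γ P π f s0 = ∑ s0, ∑ a, π s a * P s a s0 * Vv γ P π f s0 from
          Finset.sum_congr rfl fun s0 _ => by rw [hρ'eq s0, Finset.sum_mul]]
    _ = ∑ a, π s a * f s a + γ * ∑ a, ∑ s0, π s a * P s a s0 * Vv γ P π f s0 := by
        rw [Finset.sum_comm]
    _ = ∑ a, π s a * (f s a + γ * ∑ s', P s a s' * Vv γ P π f s') := by
        rw [Finset.mul_sum, ← Finset.sum_add_distrib]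
        refine Finset.sum_congr rfl fun a _ => ?_
        have h3 : ∑ s0, π s a * P s a s0 * Vv γ P π f s0
            = π s a * ∑ s', P s a s' * Vv γ P π f s' := by
          rw [Finset.mul_sum]
          exact Finset.sum_congr rfl fun s0 _ => by ring
        rw [h3]
        ring

end Generic2
section Generic3
variable {σ α : Type} [Fintype σ] [Fintype α] [DecidableEq σ]
variable (γ : ℝ) (P : σ → α → σ → ℝ) (π : σ → α → ℝ) (ρ : σ → ℝ) (f : σ → α → ℝ)

/-- The "performance difference"-style master identity. -/
lemma master (hγ0 : 0 ≤ γ) (hγ1 : γ < 1) (hP : ∀ s a, P s a ∈ stdSimplex ℝ σ)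
    (hπ0 : ∀ s a, 0 ≤ π s a) (hπ1 : ∀ s, ∑ a, π s a = 1)
    (π' : σ → α → ℝ) {M : ℝ} (hM1 : 1 ≤ M) (hM' : ∀ s, ∑ a, |π' s a| ≤ M) (hγM : γ * M < 1)
    (hρ0 : ∀ s, 0 ≤ ρ s) (hρ1 : ∑ s, ρ s = 1) :
    expDisc γ P π' ρ f = expDisc γ P π ρ f
      + ∑' t : ℕ, γ ^ t * ∑ s, stateDist P π' ρ t s *
          ∑ a, (π' s a - π s a) * (f s a + γ * ∑ s', P s a s' * Vv γ P π f s') := by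
  have hM0 : (0:ℝ) ≤ M := le_trans zero_le_one hM1
  have hρabs : ∑ s, |ρ s| ≤ 1 := by
    rw [show ∑ s, |ρ s| = ∑ s, ρ s from Finset.sum_congr rfl fun s _ => abs_of_nonneg (hρ0 s)]
    exact le_of_eq hρ1
  have hMπ : ∀ s, ∑ a, |π s a| ≤ 1 := by
    intro s
    rw [show ∑ a, |π s a| = ∑ a, π s a from
      Finset.sum_congr rfl fun a _ => abs_of_nonneg (hπ0 s a), hπ1 s]
  set V : σ → ℝ := Vv γ P π f with hV
  set d : ℕ → σ → ℝ := stateDist P π' ρ with hd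
  set Gf : ℕ → ℝ := fun t => γ ^ t * ∑ s, d t s *
      ∑ a, (π' s a - π s a) * (f s a + γ * ∑ s', P s a s' * V s') with hGf
  set W : ℕ → ℝ := fun t => γ ^ t * ∑ s, d t s * V s with hW
  set u : ℕ → ℝ := fun t => γ ^ t * ∑ s, d t s * ∑ a, π' s a * f s a with hu
  set Q : σ → α → ℝ := fun s a => f s a + γ * ∑ s', P s a s' * V s' with hQdef
  -- bounds
  set GV : ℝ := ∑ s, |V s| with hGV
  have hGV0 : 0 ≤ GV := Finset.sum_nonneg fun _ _ => abs_nonneg _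
  have hVle : ∀ s, |V s| ≤ GV := fun s =>
    Finset.single_le_sum (f := fun s => |V s|) (fun _ _ => abs_nonneg _) (Finset.mem_univ s)
  set FQ : ℝ := ∑ s, ∑ a, |Q s a| with hFQ
  have hFQ0 : 0 ≤ FQ := F_nonneg Q
  set Ff : ℝ := ∑ s, ∑ a, |f s a| with hFf
  have hFf0 : 0 ≤ Ff := F_nonneg f
  have hdiffM : ∀ s, ∑ a, |π' s a - π s a| ≤ M + 1 := by
    intro s
    calc ∑ a, |π' s a - π s a| ≤ ∑ a, (|π' s a| + |π s a|) :=
          Finset.sum_le_sum fun a _ => abs_sub _ _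
      _ = (∑ a, |π' s a|) + ∑ a, |π s a| := Finset.sum_add_distrib
      _ ≤ M + 1 := add_le_add (hM' s) (hMπ s)
  have hgQ : ∀ s, |∑ a, (π' s a - π s a) * Q s a| ≤ (M + 1) * FQ :=
    pif_bound (fun s a => π' s a - π s a) Q hdiffM
  have hgf : ∀ s, |∑ a, π' s a * f s a| ≤ M * Ff := pif_bound π' f hM'
  -- summability
  have Su : Summable u :=
    summable_main γ P π' ρ hγ0 hP hM0 hγM hρabs hM' _ (mul_nonneg hM0 hFf0) hgf
  have SG : Summable Gf := by
    refine summable_main γ P π' ρ hγ0 hP hM0 hγM hρabs hM' _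
      (mul_nonneg (by linarith) hFQ0) hgQ
  -- step identity
  have hstep : ∀ t, Gf t = u t + W (t+1) - W t := by
    intro t
    have hbell : ∀ s, ∑ a, π s a * Q s a = V s := by
      intro s
      exact (bellman γ P π f hγ0 hγ1 hP hπ0 hπ1 s).symm
    have hg : ∀ s, ∑ a, (π' s a - π s a) * Q s a
        = (∑ a, π' s a * f s a) + (γ * ∑ a, π' s a * ∑ s', P s a s' * V s') - V s := by
      intro s
      have e1 : ∑ a, (π' s a - π s a) * Q s a
          = (∑ a, π' s a * Q s a) - ∑ a, π s a * Q s a := by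
        rw [← Finset.sum_sub_distrib]
        exact Finset.sum_congr rfl fun a _ => by ring
      have e2 : ∑ a, π' s a * Q s a
          = (∑ a, π' s a * f s a) + γ * ∑ a, π' s a * ∑ s', P s a s' * V s' := by
        rw [Finset.mul_sum, ← Finset.sum_add_distrib]
        refine Finset.sum_congr rfl fun a _ => ?_
        rw [hQdef]
        ring
      rw [e1, e2, hbell s]
    have hWsucc : W (t+1) = γ ^ t * ∑ s, d t s * (γ * ∑ a, π' s a * ∑ s', P s a s' * V s') := by
      calc W (t+1)
          = γ ^ (t+1) * ∑ s', (∑ s, ∑ a, d t s * π' s a * P s a s') * V s' := rfl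
        _ = γ ^ (t+1) * ∑ s', ∑ s, ∑ a, d t s * π' s a * P s a s' * V s' := by
            congr 1
            refine Finset.sum_congr rfl fun s' _ => ?_
            rw [Finset.sum_mul]
            exact Finset.sum_congr rfl fun s _ => by rw [Finset.sum_mul]
        _ = γ ^ (t+1) * ∑ s, ∑ s', ∑ a, d t s * π' s a * P s a s' * V s' := by
            congr 1
            exact Finset.sum_comm
        _ = γ ^ (t+1) * ∑ s, ∑ a, ∑ s', d t s * π' s a * P s a s' * V s' := by
            congr 1
            exact Finset.sum_congr rfl fun s _ => Finset.sum_comm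
        _ = γ ^ t * ∑ s, γ * ∑ a, ∑ s', d t s * π' s a * P s a s' * V s' := by
            rw [pow_succ, Finset.mul_sum, Finset.mul_sum]
            exact Finset.sum_congr rfl fun s _ => by ring
        _ = γ ^ t * ∑ s, d t s * (γ * ∑ a, π' s a * ∑ s', P s a s' * V s') := by
            congr 1
            refine Finset.sum_congr rfl fun s _ => ?_
            simp only [Finset.mul_sum]
            exact Finset.sum_congr rfl fun a _ => Finset.sum_congr rfl fun s' _ => by ring
    have split : ∑ s, d t s * ∑ a, (π' s a - π s a) * Q s a
        = (∑ s, d t s * ∑ a, π' s a * f s a)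
          + (∑ s, d t s * (γ * ∑ a, π' s a * ∑ s', P s a s' * V s'))
          - ∑ s, d t s * V s := by
      rw [← Finset.sum_add_distrib, ← Finset.sum_sub_distrib]
      refine Finset.sum_congr rfl fun s _ => ?_
      rw [hg s]
      ring
    calc Gf t = γ ^ t * ∑ s, d t s * ∑ a, (π' s a - π s a) * Q s a := rfl
      _ = γ ^ t * ((∑ s, d t s * ∑ a, π' s a * f s a)
          + (∑ s, d t s * (γ * ∑ a, π' s a * ∑ s', P s a s' * V s'))
          - ∑ s, d t s * V s) := by rw [split]
      _ = u t + (γ ^ t * ∑ s, d t s * (γ * ∑ a, π' s a * ∑ s', P s a s' * V s')) - W t := by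
          rw [hu, hW]
          ring
      _ = u t + W (t+1) - W t := by rw [hWsucc]
  -- limit of W
  have hγM0 : 0 ≤ γ * M := mul_nonneg hγ0 hM0
  have hWb : ∀ t, |W t| ≤ GV * (γ * M) ^ t := by
    intro t
    rw [hW]
    simp only []
    rw [abs_mul, abs_pow, abs_of_nonneg hγ0, mul_pow]
    calc γ ^ t * |∑ s, d t s * V s| ≤ γ ^ t * (1 * M ^ t * GV) :=
          mul_le_mul_of_nonneg_left
            (weighted_bound P π' ρ hP hM0 hρabs hM' V hGV0 hVle t) (pow_nonneg hγ0 t)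
      _ = GV * (γ ^ t * M ^ t) := by ring
  have hWlim : Filter.Tendsto W Filter.atTop (nhds 0) := by
    refine squeeze_zero_norm (fun t => by simpa [Real.norm_eq_abs] using hWb t) ?_
    simpa using (tendsto_pow_atTop_nhds_zero_of_lt_one hγM0 hγM).const_mul GV
  -- W 0 = expDisc of π
  have hW0 : W 0 = expDisc γ P π ρ f := by
    rw [expDisc_linear γ P π ρ f hγ0 hγ1 hP hπ0 hπ1, hW]
    simp only [pow_zero, one_mul]
    rfl
  have hexp' : expDisc γ P π' ρ f = ∑' t, u t := by
    rw [expDisc_eq]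
  have hHasSum : HasSum Gf ((∑' t, u t) - W 0) := by
    rw [Summable.hasSum_iff_tendsto_nat SG]
    have hps : ∀ n, ∑ t ∈ Finset.range n, Gf t
        = (∑ t ∈ Finset.range n, u t) + (W n - W 0) := by
      intro n
      have e : ∀ t, Gf t = u t + (W (t+1) - W t) := fun t => by rw [hstep t]; ring
      rw [Finset.sum_congr rfl fun t _ => e t, Finset.sum_add_distrib, Finset.sum_range_sub]
    refine Filter.Tendsto.congr (fun n => (hps n).symm) ?_
    have h1 := Su.hasSum.tendsto_sum_nat
    have h2 : Filter.Tendsto (fun n => W n - W 0) Filter.atTop (nhds (0 - W 0)) :=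
      hWlim.sub tendsto_const_nhds
    simpa [sub_eq_add_neg] using h1.add h2
  rw [hexp', hHasSum.tsum_eq, hW0]
  ring
end Generic3
section Game
open scoped Classical
variable {N : ℕ} {S : Type} {A : Fin N → Type}
variable [Fintype S] [DecidableEq S] [Nonempty S] [∀ i, Fintype (A i)] [∀ i, Nonempty (A i)]

/-- Product of the other agents' policies. -/
def coPol (θ : ∀ i, S → A i → ℝ) (i : Fin N) : S → (∀ j, A j) → ℝ :=
  fun s a => ∏ j ∈ Finset.univ.erase i, θ j s (a j)

lemma coPol_nonneg (θ : ∀ i, S → A i → ℝ) (hθ : feasible θ) (i : Fin N) (s : S) (a : ∀ j, A j) :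
    0 ≤ coPol θ i s a :=
  Finset.prod_nonneg fun j _ => (hθ j s).1 (a j)

lemma jointPi_update (θ : ∀ i, S → A i → ℝ) (i : Fin N) (x : S → A i → ℝ) (s : S)
    (a : ∀ j, A j) :
    jointPi (Function.update θ i x) s a = x s (a i) * coPol θ i s a := by
  unfold jointPi coPol
  rw [← Finset.mul_prod_erase Finset.univ _ (Finset.mem_univ i), Function.update_self]
  congr 1
  refine Finset.prod_congr rfl fun j hj => ?_
  rw [Function.update_of_ne (Finset.ne_of_mem_erase hj)]

lemma sum_coPol (θ : ∀ i, S → A i → ℝ) (hθ : feasible θ) (i : Fin N) (x : A i → ℝ) (s : S) :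
    ∑ a : ∀ j, A j, x (a i) * coPol θ i s a = ∑ b, x b := by
  classical
  set g : ∀ j, A j → ℝ := Function.update (fun j (y : A j) => θ j s y) i x with hgdef
  have hterm : ∀ a : ∀ j, A j, x (a i) * coPol θ i s a = ∏ j, g j (a j) := by
    intro a
    rw [← Finset.mul_prod_erase Finset.univ (fun j => g j (a j)) (Finset.mem_univ i)]
    rw [hgdef]
    rw [Function.update_self]
    congr 1
    refine Finset.prod_congr rfl fun j hj => ?_
    rw [Function.update_of_ne (Finset.ne_of_mem_erase hj)]
  rw [Finset.sum_congr rfl fun a _ => hterm a]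
  have hps : ∑ a : ∀ j, A j, ∏ j, g j (a j) = ∏ j, ∑ y, g j y := by
    rw [Finset.prod_univ_sum]
    rw [Fintype.piFinset_univ]
  rw [hps, ← Finset.mul_prod_erase Finset.univ (fun j => ∑ y, g j y) (Finset.mem_univ i)]
  have hgi : g i = x := by rw [hgdef, Function.update_self]
  have hrest : ∏ j ∈ Finset.univ.erase i, ∑ y, g j y = 1 := by
    refine Finset.prod_eq_one fun j hj => ?_
    rw [hgdef, Function.update_of_ne (Finset.ne_of_mem_erase hj)]
    exact (hθ j s).2
  rw [hgi, hrest, mul_one]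

lemma sum_abs_pol (θ : ∀ i, S → A i → ℝ) (hθ : feasible θ) (i : Fin N) (x : A i → ℝ) (s : S) :
    ∑ a : ∀ j, A j, |x (a i) * coPol θ i s a| = ∑ b, |x b| := by
  rw [← sum_coPol θ hθ i (fun b => |x b|) s]
  exact Finset.sum_congr rfl fun a _ => by
    rw [abs_mul, abs_of_nonneg (coPol_nonneg θ hθ i s a)]

lemma coord_le_norm (h : S → A i → ℝ) (s : S) (b : A i) : |h s b| ≤ ‖h‖ := by
  have h1 : ‖h s b‖ ≤ ‖h s‖ := norm_le_pi_norm (h s) b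
  have h2 : ‖h s‖ ≤ ‖h‖ := norm_le_pi_norm h s
  simpa [Real.norm_eq_abs] using h1.trans h2

lemma sum_abs_coord_le (h : S → A i → ℝ) (s : S) :
    ∑ b, |h s b| ≤ (Fintype.card (A i) : ℝ) * ‖h‖ := by
  calc ∑ b, |h s b| ≤ ∑ _b : A i, ‖h‖ := Finset.sum_le_sum fun b _ => coord_le_norm h s b
    _ = (Fintype.card (A i) : ℝ) * ‖h‖ := by
        rw [Finset.sum_const, Finset.card_univ, nsmul_eq_mul]

/-- The `q`-function of agent `i`: expected one-step value of playing `b`,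
marginalizing the other agents. -/
noncomputable def qFun (γ : ℝ) (P : S → (∀ j, A j) → S → ℝ) (θ : ∀ j, S → A j → ℝ)
    (rr : S → (∀ j, A j) → ℝ) (i : Fin N) (s : S) (b : A i) : ℝ :=
  ∑ a : ∀ j, A j, (if a i = b then 1 else 0) *
    (coPol θ i s a * (rr s a + γ * ∑ s', P s a s' * Vv γ P (jointPi θ) rr s'))

/-- Unnormalized discounted visitation weights. -/
noncomputable def wFun (γ : ℝ) (P : S → (∀ j, A j) → S → ℝ) (θ : ∀ j, S → A j → ℝ)
    (ρ : S → ℝ) (s : S) : ℝ :=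
  ∑' t : ℕ, γ ^ t * stateDist P (jointPi θ) ρ t s

/-- The candidate derivative, as a continuous linear map. -/
noncomputable def Lmap (γ : ℝ) (P : S → (∀ j, A j) → S → ℝ) (θ : ∀ j, S → A j → ℝ)
    (ρ : S → ℝ) (rr : S → (∀ j, A j) → ℝ) (i : Fin N) : (S → A i → ℝ) →L[ℝ] ℝ :=
  ∑ s, ∑ b, (wFun γ P θ ρ s * qFun γ P θ rr i s b) •
    ((ContinuousLinearMap.proj b).comp
      (ContinuousLinearMap.proj (R := ℝ) (φ := fun _ : S => A i → ℝ) s))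

lemma Lmap_apply (γ : ℝ) (P : S → (∀ j, A j) → S → ℝ) (θ : ∀ j, S → A j → ℝ)
    (ρ : S → ℝ) (rr : S → (∀ j, A j) → ℝ) (i : Fin N) (h : S → A i → ℝ) :
    Lmap γ P θ ρ rr i h = ∑ s, wFun γ P θ ρ s * ∑ b, h s b * qFun γ P θ rr i s b := by
  rw [Lmap]
  rw [ContinuousLinearMap.sum_apply]
  refine Finset.sum_congr rfl fun s _ => ?_
  rw [ContinuousLinearMap.sum_apply, Finset.mul_sum]
  refine Finset.sum_congr rfl fun b _ => ?_
  simp only [ContinuousLinearMap.smul_apply, ContinuousLinearMap.comp_apply,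
    ContinuousLinearMap.proj_apply, smul_eq_mul]
  ring

lemma hq_expand (γ : ℝ) (P : S → (∀ j, A j) → S → ℝ) (θ : ∀ j, S → A j → ℝ)
    (rr : S → (∀ j, A j) → ℝ) (i : Fin N) (h : S → A i → ℝ) (s : S) :
    ∑ a : ∀ j, A j, h s (a i) *
        (coPol θ i s a * (rr s a + γ * ∑ s', P s a s' * Vv γ P (jointPi θ) rr s'))
      = ∑ b, h s b * qFun γ P θ rr i s b := by
  unfold qFun
  have key : ∀ a : ∀ j, A j, h s (a i) *
      (coPol θ i s a * (rr s a + γ * ∑ s', P s a s' * Vv γ P (jointPi θ) rr s'))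
      = ∑ b, h s b * ((if a i = b then 1 else 0) *
        (coPol θ i s a * (rr s a + γ * ∑ s', P s a s' * Vv γ P (jointPi θ) rr s'))) := by
    intro a
    have e : ∀ b, h s b * ((if a i = b then 1 else 0) *
        (coPol θ i s a * (rr s a + γ * ∑ s', P s a s' * Vv γ P (jointPi θ) rr s')))
        = if a i = b then h s b *
          (coPol θ i s a * (rr s a + γ * ∑ s', P s a s' * Vv γ P (jointPi θ) rr s')) else 0 := by
      intro b
      split <;> ring
    rw [Finset.sum_congr rfl fun b _ => e b, Finset.sum_ite_eq]
    simp
  rw [Finset.sum_congr rfl fun a _ => key a, Finset.sum_comm]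
  refine Finset.sum_congr rfl fun b _ => ?_
  rw [Finset.mul_sum]

end Game
section Generic4
variable {σ α : Type} [Fintype σ] [Fintype α] [DecidableEq σ]

lemma sd_abs_single (P : σ → α → σ → ℝ) (π : σ → α → ℝ) (ρ : σ → ℝ)
    (hP : ∀ s a, P s a ∈ stdSimplex ℝ σ) (hρ : ∑ s, |ρ s| ≤ 1)
    (hM : ∀ s, ∑ a, |π s a| ≤ 1) (t : ℕ) (s : σ) : |stateDist P π ρ t s| ≤ 1 := by
  calc |stateDist P π ρ t s| ≤ ∑ s', |stateDist P π ρ t s'| :=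
        Finset.single_le_sum (f := fun s' => |stateDist P π ρ t s'|)
          (fun _ _ => abs_nonneg _) (Finset.mem_univ s)
    _ ≤ 1 * 1 ^ t := sd_abs_mass P π ρ hP zero_le_one hρ hM t
    _ = 1 := by norm_num
end Generic4

section Game2
open scoped Classical
variable {N : ℕ} {S : Type} {A : Fin N → Type}
variable [Fintype S] [DecidableEq S] [Nonempty S] [∀ i, Fintype (A i)] [∀ i, Nonempty (A i)]
variable (γ : ℝ) (P : S → (∀ j, A j) → S → ℝ) (θ : ∀ j, S → A j → ℝ)
variable (ρ : S → ℝ) (rr : S → (∀ j, A j) → ℝ) (i : Fin N)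

lemma jointPi_nonneg (hθ : feasible θ) (s : S) (a : ∀ j, A j) : 0 ≤ jointPi θ s a :=
  Finset.prod_nonneg fun j _ => (hθ j s).1 (a j)

lemma jointPi_sum (hθ : feasible θ) (s : S) : ∑ a : (∀ j, A j), jointPi θ s a = 1 := by
  unfold jointPi
  rw [show ∑ a : (∀ j, A j), ∏ j, θ j s (a j) = ∏ j, ∑ y, θ j s y from by
    rw [Finset.prod_univ_sum, Fintype.piFinset_univ]]
  exact Finset.prod_eq_one fun j _ => (hθ j s).2

lemma jointPi_abs_sum (hθ : feasible θ) (s : S) :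
    ∑ a : (∀ j, A j), |jointPi θ s a| ≤ 1 := by
  rw [show ∑ a : (∀ j, A j), |jointPi θ s a| = ∑ a : (∀ j, A j), jointPi θ s a from
    Finset.sum_congr rfl fun a _ => abs_of_nonneg (jointPi_nonneg θ hθ s a)]
  exact le_of_eq (jointPi_sum θ hθ s)

lemma update_abs_sum (hθ : feasible θ) (x : S → A i → ℝ) (s : S) :
    ∑ a : (∀ j, A j), |jointPi (Function.update θ i x) s a| = ∑ b, |x s b| := by
  rw [Finset.sum_congr rfl fun a (_ : a ∈ Finset.univ) => by
    rw [jointPi_update θ i x s a]]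
  exact sum_abs_pol θ hθ i (x s) s

lemma diff_formula (hγ0 : 0 ≤ γ) (hγ1 : γ < 1) (hP : ∀ s a, P s a ∈ stdSimplex ℝ S)
    (hρ : ρ ∈ stdSimplex ℝ S) (hθ : feasible θ) (x : S → A i → ℝ) {M : ℝ} (hM1 : 1 ≤ M)
    (hMx : ∀ s, ∑ b, |x s b| ≤ M) (hγM : γ * M < 1) :
    expDisc γ P (jointPi (Function.update θ i x)) ρ rr
      = expDisc γ P (jointPi θ) ρ rr
        + ∑' t : ℕ, γ ^ t * ∑ s, stateDist P (jointPi (Function.update θ i x)) ρ t s *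
            ∑ b, (x s b - θ i s b) * qFun γ P θ rr i s b := by
  have hM' : ∀ s, ∑ a : (∀ j, A j), |jointPi (Function.update θ i x) s a| ≤ M := by
    intro s
    rw [update_abs_sum θ i hθ x s]
    exact hMx s
  have h1 := master γ P (jointPi θ) ρ rr hγ0 hγ1 hP (jointPi_nonneg θ hθ)
      (jointPi_sum θ hθ) (jointPi (Function.update θ i x)) hM1 hM' hγM hρ.1 hρ.2
  rw [h1]
  congr 1
  refine tsum_congr fun t => ?_
  congr 1
  refine Finset.sum_congr rfl fun s _ => ?_
  congr 1
  have hsub : ∀ a : (∀ j, A j), jointPi (Function.update θ i x) s a - jointPi θ s a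
      = (x s (a i) - θ i s (a i)) * coPol θ i s a := by
    intro a
    have e1 : jointPi θ s a = θ i s (a i) * coPol θ i s a := by
      conv_lhs => rw [← Function.update_eq_self i θ]
      exact jointPi_update θ i (θ i) s a
    rw [jointPi_update θ i x s a, e1]
    ring
  calc ∑ a : (∀ j, A j), (jointPi (Function.update θ i x) s a - jointPi θ s a) *
        (rr s a + γ * ∑ s', P s a s' * Vv γ P (jointPi θ) rr s')
      = ∑ a : (∀ j, A j), (x s (a i) - θ i s (a i)) *
        (coPol θ i s a * (rr s a + γ * ∑ s', P s a s' * Vv γ P (jointPi θ) rr s')) := by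
        refine Finset.sum_congr rfl fun a _ => ?_
        rw [hsub a]
        ring
    _ = ∑ b, (x s b - θ i s b) * qFun γ P θ rr i s b :=
        hq_expand γ P θ rr i (fun s b => x s b - θ i s b) s

lemma Lmap_tsum (hγ0 : 0 ≤ γ) (hγ1 : γ < 1) (hP : ∀ s a, P s a ∈ stdSimplex ℝ S)
    (hρ : ρ ∈ stdSimplex ℝ S) (hθ : feasible θ) (h : S → A i → ℝ) :
    Lmap γ P θ ρ rr i h = ∑' t : ℕ, γ ^ t * ∑ s, stateDist P (jointPi θ) ρ t s *
      ∑ b, h s b * qFun γ P θ rr i s b := by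
  have hρabs : ∑ s, |ρ s| ≤ 1 := by
    rw [show ∑ s, |ρ s| = ∑ s, ρ s from Finset.sum_congr rfl fun s _ => abs_of_nonneg (hρ.1 s)]
    exact le_of_eq hρ.2
  have hsum_s : ∀ s : S, Summable (fun t : ℕ => γ ^ t * stateDist P (jointPi θ) ρ t s *
      ∑ b, h s b * qFun γ P θ rr i s b) := by
    intro s
    refine summable_geom_aux hγ0 hγ1 (C := |∑ b, h s b * qFun γ P θ rr i s b|) fun t => ?_
    rw [abs_mul, abs_mul, abs_pow, abs_of_nonneg hγ0]
    calc γ ^ t * |stateDist P (jointPi θ) ρ t s| * |∑ b, h s b * qFun γ P θ rr i s b|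
        ≤ γ ^ t * 1 * |∑ b, h s b * qFun γ P θ rr i s b| := by
          refine mul_le_mul_of_nonneg_right ?_ (abs_nonneg _)
          exact mul_le_mul_of_nonneg_left
            (sd_abs_single P (jointPi θ) ρ hP hρabs (jointPi_abs_sum θ hθ) t s)
            (pow_nonneg hγ0 t)
      _ = |∑ b, h s b * qFun γ P θ rr i s b| * γ ^ t := by ring
  rw [Lmap_apply]
  calc ∑ s, wFun γ P θ ρ s * ∑ b, h s b * qFun γ P θ rr i s b
      = ∑ s, ∑' t : ℕ, γ ^ t * stateDist P (jointPi θ) ρ t s *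
          ∑ b, h s b * qFun γ P θ rr i s b := by
        refine Finset.sum_congr rfl fun s _ => ?_
        rw [wFun, ← tsum_mul_right]
    _ = ∑' t : ℕ, ∑ s, γ ^ t * stateDist P (jointPi θ) ρ t s *
          ∑ b, h s b * qFun γ P θ rr i s b :=
        (Summable.tsum_finsetSum fun s _ => hsum_s s).symm
    _ = ∑' t : ℕ, γ ^ t * ∑ s, stateDist P (jointPi θ) ρ t s *
          ∑ b, h s b * qFun γ P θ rr i s b := by
        refine tsum_congr fun t => ?_
        rw [Finset.mul_sum]
        exact Finset.sum_congr rfl fun s _ => by ring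
end Game2
section Game3
open scoped Classical
variable {N : ℕ} {S : Type} {A : Fin N → Type}
variable [Fintype S] [DecidableEq S] [Nonempty S] [∀ i, Fintype (A i)] [∀ i, Nonempty (A i)]
variable (γ : ℝ) (P : S → (∀ j, A j) → S → ℝ) (θ : ∀ j, S → A j → ℝ)
variable (ρ : S → ℝ) (rr : S → (∀ j, A j) → ℝ) (i : Fin N)

lemma quad_bound (hγ0 : 0 ≤ γ) (hγ1 : γ < 1) (hP : ∀ s a, P s a ∈ stdSimplex ℝ S)
    (hρ : ρ ∈ stdSimplex ℝ S) (hθ : feasible θ) :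
    ∃ C : ℝ, 0 ≤ C ∧ ∀ x : S → A i → ℝ,
      ‖x - θ i‖ ≤ (1 - γ) / (2 * (Fintype.card (A i) : ℝ)) →
      |expDisc γ P (jointPi (Function.update θ i x)) ρ rr
        - expDisc γ P (jointPi θ) ρ rr - Lmap γ P θ ρ rr i (x - θ i)|
        ≤ C * ‖x - θ i‖ ^ 2 := by
  have hρabs : ∑ s, |ρ s| ≤ 1 := by
    rw [show ∑ s, |ρ s| = ∑ s, ρ s from Finset.sum_congr rfl fun s _ => abs_of_nonneg (hρ.1 s)]
    exact le_of_eq hρ.2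
  set K : ℝ := (Fintype.card (A i) : ℝ) with hK
  have hK1 : 1 ≤ K := by
    rw [hK]
    exact_mod_cast Fintype.card_pos
  have hK0 : 0 < K := lt_of_lt_of_le zero_lt_one hK1
  set δ : ℝ := (1 - γ) / (2 * K) with hδ
  have hδ0 : 0 ≤ δ := div_nonneg (by linarith) (by linarith)
  set γ' : ℝ := (1 + γ) / 2 with hγ'
  have hγ'0 : 0 ≤ γ' := by rw [hγ']; linarith
  have hγ'1 : γ' < 1 := by rw [hγ']; linarith
  set Mδ : ℝ := 1 + K * δ with hMδ
  have hMδ1 : 1 ≤ Mδ := by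
    rw [hMδ]
    nlinarith
  have hγMδ : γ * Mδ ≤ γ' := by
    rw [hMδ, hδ, hγ']
    have e : K * ((1 - γ) / (2 * K)) = (1 - γ) / 2 := by
      field_simp
    rw [mul_add, e]
    nlinarith
  have hγMδ1 : γ * Mδ < 1 := lt_of_le_of_lt hγMδ hγ'1
  set Qm : ℝ := ∑ s, ∑ b, |qFun γ P θ rr i s b| with hQm
  have hQm0 : 0 ≤ Qm := F_nonneg _
  -- the series constant
  have hsumC : Summable (fun u : ℕ => ((u : ℝ) + 1) * γ' ^ u) := by
    have h1 : Summable (fun u : ℕ => (u : ℝ) * γ' ^ u) := by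
      simpa using summable_pow_mul_geometric_of_norm_lt_one 1
        (r := γ') (by rw [Real.norm_eq_abs, abs_of_nonneg hγ'0]; exact hγ'1)
    have h2 : Summable (fun u : ℕ => γ' ^ u) := summable_geometric_of_lt_one hγ'0 hγ'1
    simpa [add_mul, one_mul] using h1.add h2
  set Cser : ℝ := ∑' u : ℕ, ((u : ℝ) + 1) * γ' ^ u with hCser
  have hCser0 : 0 ≤ Cser :=
    tsum_nonneg fun u => mul_nonneg (by positivity) (pow_nonneg hγ'0 u)
  have hsumshift : Summable (fun t : ℕ => (t : ℝ) * γ' ^ (t - 1)) := by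
    refine (summable_nat_add_iff 1).mp ?_
    refine hsumC.congr fun u => ?_
    simp [Nat.add_sub_cancel]
  have htsumshift : (∑' t : ℕ, (t : ℝ) * γ' ^ (t - 1)) = Cser := by
    rw [Summable.tsum_eq_zero_add hsumshift]
    simp [Nat.add_sub_cancel, hCser]
  refine ⟨K ^ 2 * Qm * Cser, by positivity, fun x hx => ?_⟩
  set h : S → A i → ℝ := x - θ i with hh
  have hcoord : ∀ s, ∑ b, |x s b - θ i s b| ≤ K * ‖h‖ := by
    intro s
    have := sum_abs_coord_le (i := i) h s
    rw [hK]
    refine le_trans (le_of_eq ?_) this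
    refine Finset.sum_congr rfl fun b _ => ?_
    rw [hh]
    simp
  have hMx : ∀ s, ∑ b, |x s b| ≤ Mδ := by
    intro s
    calc ∑ b, |x s b| ≤ ∑ b, (|θ i s b| + |x s b - θ i s b|) := by
          refine Finset.sum_le_sum fun b _ => ?_
          calc |x s b| = |θ i s b + (x s b - θ i s b)| := by ring_nf
            _ ≤ |θ i s b| + |x s b - θ i s b| := abs_add_le _ _
      _ = (∑ b, |θ i s b|) + ∑ b, |x s b - θ i s b| := Finset.sum_add_distrib
      _ ≤ 1 + K * ‖h‖ := by
          refine add_le_add (le_of_eq ?_) (hcoord s)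
          rw [show ∑ b, |θ i s b| = ∑ b, θ i s b from
            Finset.sum_congr rfl fun b _ => abs_of_nonneg ((hθ i s).1 b)]
          exact (hθ i s).2
      _ ≤ Mδ := by
          rw [hMδ]
          have : K * ‖h‖ ≤ K * δ := mul_le_mul_of_nonneg_left (by rw [hh]; exact hx) (le_of_lt hK0)
          linarith
  -- per-state bound on the direction term
  have hgh : ∀ s, |∑ b, (x s b - θ i s b) * qFun γ P θ rr i s b| ≤ (K * ‖h‖) * Qm :=
    pif_bound (fun s b => x s b - θ i s b) (qFun γ P θ rr i) hcoord
  have hgh0 : 0 ≤ K * ‖h‖ * Qm := by positivity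
  -- the two series
  set dd : ℕ → S → ℝ := stateDist P (jointPi (Function.update θ i x)) ρ with hdd
  set d0 : ℕ → S → ℝ := stateDist P (jointPi θ) ρ with hd0
  set gh : S → ℝ := fun s => ∑ b, (x s b - θ i s b) * qFun γ P θ rr i s b with hghdef
  have hMup : ∀ s, ∑ a : (∀ j, A j), |jointPi (Function.update θ i x) s a| ≤ Mδ := by
    intro s
    rw [update_abs_sum θ i hθ x s]
    exact hMx s
  have hMθ : ∀ s, ∑ a : (∀ j, A j), |jointPi θ s a| ≤ Mδ :=
    fun s => le_trans (jointPi_abs_sum θ hθ s) hMδ1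
  have SA : Summable (fun t : ℕ => γ ^ t * ∑ s, dd t s * gh s) :=
    summable_main γ P _ ρ hγ0 hP (by linarith) hγMδ1 hρabs hMup gh hgh0 hgh
  have SB : Summable (fun t : ℕ => γ ^ t * ∑ s, d0 t s * gh s) :=
    summable_main γ P _ ρ hγ0 hP (by linarith) hγMδ1 hρabs hMθ gh hgh0 hgh
  -- rewrite the difference as a single series
  have hdiff := diff_formula γ P θ ρ rr i hγ0 hγ1 hP hρ hθ x hMδ1 hMx hγMδ1
  have hLm := Lmap_tsum γ P θ ρ rr i hγ0 hγ1 hP hρ hθ (x - θ i)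
  have hLm' : Lmap γ P θ ρ rr i (x - θ i) = ∑' t : ℕ, γ ^ t * ∑ s, d0 t s * gh s := hLm
  have hdiff' : expDisc γ P (jointPi (Function.update θ i x)) ρ rr
      = expDisc γ P (jointPi θ) ρ rr + ∑' t : ℕ, γ ^ t * ∑ s, dd t s * gh s := hdiff
  have hE : expDisc γ P (jointPi (Function.update θ i x)) ρ rr
      - expDisc γ P (jointPi θ) ρ rr - Lmap γ P θ ρ rr i (x - θ i)
      = ∑' t : ℕ, (γ ^ t * ∑ s, dd t s * gh s - γ ^ t * ∑ s, d0 t s * gh s) := by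
    rw [hdiff', hLm', Summable.tsum_sub SA SB, add_sub_cancel_left]
  rw [hE]
  -- Lipschitz bound on the per-term difference
  have hDlip : ∀ s, ∑ a : (∀ j, A j),
      |jointPi (Function.update θ i x) s a - jointPi θ s a| ≤ K * ‖h‖ := by
    intro s
    have hsub : ∀ a : (∀ j, A j), jointPi (Function.update θ i x) s a - jointPi θ s a
        = (x s (a i) - θ i s (a i)) * coPol θ i s a := by
      intro a
      have e1 : jointPi θ s a = θ i s (a i) * coPol θ i s a := by
        conv_lhs => rw [← Function.update_eq_self i θ]
        exact jointPi_update θ i (θ i) s a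
      rw [jointPi_update θ i x s a, e1]
      ring
    rw [Finset.sum_congr rfl fun a _ => by rw [hsub a]]
    rw [sum_abs_pol θ hθ i (fun b => x s b - θ i s b) s]
    exact hcoord s
  have hlip := sd_lipschitz P (jointPi (Function.update θ i x)) ρ (jointPi θ) hP
      (by linarith : (0:ℝ) ≤ Mδ) (by positivity : (0:ℝ) ≤ K * ‖h‖) hρabs hMup hMθ hDlip
  have hterm : ∀ t : ℕ, |γ ^ t * ∑ s, dd t s * gh s - γ ^ t * ∑ s, d0 t s * gh s|
      ≤ ((t : ℝ) * γ' ^ (t - 1)) * (K ^ 2 * Qm * ‖h‖ ^ 2) := by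
    intro t
    have e : γ ^ t * ∑ s, dd t s * gh s - γ ^ t * ∑ s, d0 t s * gh s
        = γ ^ t * ∑ s, (dd t s - d0 t s) * gh s := by
      rw [← mul_sub, ← Finset.sum_sub_distrib]
      congr 1
      exact Finset.sum_congr rfl fun s _ => (sub_mul _ _ _).symm
    rw [e, abs_mul, abs_pow, abs_of_nonneg hγ0]
    have h1 : |∑ s, (dd t s - d0 t s) * gh s| ≤ ((t : ℝ) * Mδ ^ (t-1) * (K * ‖h‖)) * (K * ‖h‖ * Qm) := by
      refine (Finset.abs_sum_le_sum_abs _ _).trans ?_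
      calc ∑ s, |(dd t s - d0 t s) * gh s|
          ≤ ∑ s, |dd t s - d0 t s| * (K * ‖h‖ * Qm) := by
            refine Finset.sum_le_sum fun s _ => ?_
            rw [abs_mul]
            exact mul_le_mul_of_nonneg_left (hgh s) (abs_nonneg _)
        _ = (∑ s, |dd t s - d0 t s|) * (K * ‖h‖ * Qm) := by rw [Finset.sum_mul]
        _ ≤ ((t : ℝ) * Mδ ^ (t-1) * (K * ‖h‖)) * (K * ‖h‖ * Qm) :=
            mul_le_mul_of_nonneg_right (hlip t) hgh0
    calc γ ^ t * |∑ s, (dd t s - d0 t s) * gh s|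
        ≤ γ ^ t * (((t : ℝ) * Mδ ^ (t-1) * (K * ‖h‖)) * (K * ‖h‖ * Qm)) :=
          mul_le_mul_of_nonneg_left h1 (pow_nonneg hγ0 t)
      _ = (γ ^ t * Mδ ^ (t-1)) * ((t : ℝ) * (K ^ 2 * Qm * ‖h‖ ^ 2)) := by ring
      _ ≤ γ' ^ (t-1) * ((t : ℝ) * (K ^ 2 * Qm * ‖h‖ ^ 2)) := by
          refine mul_le_mul_of_nonneg_right ?_ (by positivity)
          cases t with
          | zero => simp
          | succ u =>
              simp only [Nat.add_sub_cancel]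
              calc γ ^ (u+1) * Mδ ^ u = γ * (γ * Mδ) ^ u := by rw [pow_succ, mul_pow]; ring
                _ ≤ 1 * γ' ^ u := by
                    refine mul_le_mul (by linarith) ?_ (by positivity) zero_le_one
                    exact pow_le_pow_left₀ (by positivity) hγMδ u
                _ = γ' ^ u := one_mul _
      _ = ((t : ℝ) * γ' ^ (t - 1)) * (K ^ 2 * Qm * ‖h‖ ^ 2) := by ring
  -- summability of the bounding series
  have hsumB : Summable (fun t : ℕ => ((t : ℝ) * γ' ^ (t - 1)) * (K ^ 2 * Qm * ‖h‖ ^ 2)) :=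
    hsumshift.mul_right _
  have habs : Summable (fun t : ℕ => |γ ^ t * ∑ s, dd t s * gh s - γ ^ t * ∑ s, d0 t s * gh s|) :=
    Summable.of_nonneg_of_le (fun t => abs_nonneg _) hterm hsumB
  calc |∑' t : ℕ, (γ ^ t * ∑ s, dd t s * gh s - γ ^ t * ∑ s, d0 t s * gh s)|
      ≤ ∑' t : ℕ, |γ ^ t * ∑ s, dd t s * gh s - γ ^ t * ∑ s, d0 t s * gh s| := by
        simpa [Real.norm_eq_abs] using
          norm_tsum_le_tsum_norm (f := fun t : ℕ => γ ^ t * ∑ s, dd t s * gh s - γ ^ t * ∑ s, d0 t s * gh s)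
            (by simpa [Real.norm_eq_abs] using habs)
    _ ≤ ∑' t : ℕ, ((t : ℝ) * γ' ^ (t - 1)) * (K ^ 2 * Qm * ‖h‖ ^ 2) :=
        Summable.tsum_le_tsum hterm habs hsumB
    _ = Cser * (K ^ 2 * Qm * ‖h‖ ^ 2) := by rw [tsum_mul_right, htsumshift]
    _ = K ^ 2 * Qm * Cser * ‖h‖ ^ 2 := by ring
    _ = K ^ 2 * Qm * Cser * ‖x - θ i‖ ^ 2 := by rw [hh]
end Game3
section Game4
open scoped Classical
variable {N : ℕ} {S : Type} {A : Fin N → Type}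
variable [Fintype S] [DecidableEq S] [Nonempty S] [∀ i, Fintype (A i)] [∀ i, Nonempty (A i)]
variable (γ : ℝ) (P : S → (∀ j, A j) → S → ℝ) (θ : ∀ j, S → A j → ℝ)
variable (ρ : S → ℝ) (rr : S → (∀ j, A j) → ℝ) (i : Fin N)

lemma hasFDeriv (hγ0 : 0 ≤ γ) (hγ1 : γ < 1) (hP : ∀ s a, P s a ∈ stdSimplex ℝ S)
    (hρ : ρ ∈ stdSimplex ℝ S) (hθ : feasible θ) :
    HasFDerivAt (fun x : S → A i → ℝ => expDisc γ P (jointPi (Function.update θ i x)) ρ rr)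
      (Lmap γ P θ ρ rr i) (θ i) := by
  obtain ⟨C, hC0, hC⟩ := quad_bound γ P θ ρ rr i hγ0 hγ1 hP hρ hθ
  set K : ℝ := (Fintype.card (A i) : ℝ) with hK
  have hK0 : (0:ℝ) < K := by
    rw [hK]
    exact_mod_cast Fintype.card_pos
  set δ : ℝ := (1 - γ) / (2 * K) with hδ
  have hδ0 : 0 < δ := div_pos (by linarith) (by linarith)
  rw [hasFDerivAt_iff_isLittleO_nhds_zero]
  rw [Asymptotics.isLittleO_iff]
  intro c hc
  have hr0 : 0 < min δ (c / (C + 1)) :=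
    lt_min hδ0 (div_pos hc (by linarith))
  filter_upwards [Metric.closedBall_mem_nhds (0 : S → A i → ℝ) hr0] with h hball
  have hn : ‖h‖ ≤ min δ (c / (C + 1)) := by
    rwa [mem_closedBall_zero_iff] at hball
  have hxmem : ‖(θ i + h) - θ i‖ ≤ δ := by
    rw [add_sub_cancel_left]
    exact hn.trans (min_le_left _ _)
  have hq := hC (θ i + h) hxmem
  rw [add_sub_cancel_left] at hq
  have hh1 : ‖h‖ ≤ c / (C + 1) := hn.trans (min_le_right _ _)
  have hn0 : 0 ≤ ‖h‖ := norm_nonneg _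
  have h2 : C * ‖h‖ ≤ c := by
    have h3 : ‖h‖ * (C + 1) ≤ c := by
      rw [← le_div_iff₀ (by linarith : (0:ℝ) < C + 1)]
      exact hh1
    nlinarith
  rw [show Function.update θ i (θ i) = θ from Function.update_eq_self i θ]
  refine le_trans (le_of_eq (Real.norm_eq_abs _)) (le_trans hq ?_)
  calc C * ‖h‖ ^ 2 = (C * ‖h‖) * ‖h‖ := by ring
    _ ≤ c * ‖h‖ := mul_le_mul_of_nonneg_right h2 hn0

lemma update_feasible (hθ : feasible θ) (x : S → A i → ℝ)
    (hx : ∀ s, x s ∈ stdSimplex ℝ (A i)) : feasible (Function.update θ i x) := by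
  intro j s
  by_cases hj : j = i
  · subst hj
    rw [Function.update_self]
    exact hx s
  · rw [Function.update_of_ne hj]
    exact hθ j s

end Game4
/-- Under Assumption 1, a policy of a finite Markov game
under direct policy parameterization is a Nash equilibrium if and only if it
is a first-order stationary policy. -/
theorem nash_equilibrium_iff_first_order_stationary
    {N : ℕ} {S : Type} {A : Fin N → Type}
    [Fintype S] [DecidableEq S] [Nonempty S]
    [∀ i, Fintype (A i)] [∀ i, Nonempty (A i)]
    (γ : ℝ) (hγ0 : 0 ≤ γ) (hγ1 : γ < 1)
    (P : S → (∀ i, A i) → S → ℝ) (hP : ∀ s a, P s a ∈ stdSimplex ℝ S)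
    (r : Fin N → S → (∀ i, A i) → ℝ)
    (ρ : S → ℝ) (hρ : ρ ∈ stdSimplex ℝ S)
    -- Assumption 1 : d_θ(s) > 0 for all s and all feasible θ
    (hA1 : ∀ ϑ : ∀ i, S → A i → ℝ, feasible ϑ → ∀ s : S, 0 < visit γ P ϑ ρ s)
    (θ : ∀ i, S → A i → ℝ) (hθ : feasible θ) :
    -- θ is a Nash equilibrium ↔ θ is a first-order stationary policy
    (∀ i : Fin N, ∀ θi' : S → A i → ℝ,
      (∀ s, θi' s ∈ stdSimplex ℝ (A i)) →
      Jtot γ P ρ (Function.update θ i θi') (r i) ≤ Jtot γ P ρ θ (r i))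
    ↔
    (∀ i : Fin N, ∀ θi' : S → A i → ℝ,
      (∀ s, θi' s ∈ stdSimplex ℝ (A i)) →
      fderiv ℝ (fun x : S → A i → ℝ =>
          Jtot γ P ρ (Function.update θ i x) (r i)) (θ i) (θi' - θ i) ≤ 0) := by
  
  classical
  have hder : ∀ i : Fin N, HasFDerivAt
      (fun x : S → A i → ℝ => Jtot γ P ρ (Function.update θ i x) (r i))
      (Lmap γ P θ ρ (r i) i) (θ i) :=
    fun i => hasFDeriv γ P θ ρ (r i) i hγ0 hγ1 hP hρ hθ
  have hfd : ∀ i : Fin N, fderiv ℝ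
      (fun x : S → A i → ℝ => Jtot γ P ρ (Function.update θ i x) (r i)) (θ i)
      = Lmap γ P θ ρ (r i) i := fun i => (hder i).fderiv
  have hw : ∀ s, 0 < wFun γ P θ ρ s := by
    intro s
    have h1 := hA1 θ hθ s
    have h2 : visit γ P θ ρ s = (1 - γ) * wFun γ P θ ρ s := rfl
    rw [h2] at h1
    nlinarith
  constructor
  · -- NE → first-order stationary
    intro hNE i θi' hθi'
    rw [hfd i]
    set dir : S → A i → ℝ := θi' - θ i with hdir
    obtain ⟨C, hC0, hC⟩ := quad_bound γ P θ ρ (r i) i hγ0 hγ1 hP hρ hθ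
    set K : ℝ := (Fintype.card (A i) : ℝ) with hK
    have hK0 : (0:ℝ) < K := by
      rw [hK]
      exact_mod_cast Fintype.card_pos
    set δ : ℝ := (1 - γ) / (2 * K) with hδ
    have hδ0 : 0 < δ := div_pos (by linarith) (by linarith)
    refine le_of_forall_pos_le_add fun ε hε => ?_
    set D : ℝ := C * ‖dir‖ ^ 2 + 1 with hD
    have hD0 : 0 < D := by positivity
    set τ : ℝ := min (min 1 (δ / (‖dir‖ + 1))) (ε / D) with hτ
    have hτ0 : 0 < τ :=
      lt_min (lt_min one_pos (div_pos hδ0 (by positivity))) (div_pos hε hD0)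
    have hτ1 : τ ≤ 1 := le_trans (min_le_left _ _) (min_le_left _ _)
    have hτδ : τ * ‖dir‖ ≤ δ := by
      have h1 : τ ≤ δ / (‖dir‖ + 1) := le_trans (min_le_left _ _) (min_le_right _ _)
      have h2 : τ * (‖dir‖ + 1) ≤ δ := by
        rw [← le_div_iff₀ (by positivity : (0:ℝ) < ‖dir‖ + 1)]
        exact h1
      nlinarith [norm_nonneg dir, hτ0]
    set x : S → A i → ℝ := θ i + τ • dir with hx
    have hxs : ∀ s, x s ∈ stdSimplex ℝ (A i) := by
      intro s
      have hconv := (convex_stdSimplex ℝ (A i)) (hθi' s) (hθ i s)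
        (le_of_lt hτ0) (by linarith : (0:ℝ) ≤ 1 - τ) (by ring)
      convert hconv using 1
      funext b
      show θ i s b + τ * (θi' s b - θ i s b) = τ * θi' s b + (1 - τ) * θ i s b
      ring
    have hnorm : ‖x - θ i‖ ≤ δ := by
      rw [hx, add_sub_cancel_left, norm_smul, Real.norm_eq_abs, abs_of_pos hτ0]
      exact hτδ
    have hq := hC x hnorm
    rw [hx, add_sub_cancel_left] at hq
    have hle : expDisc γ P (jointPi (Function.update θ i x)) ρ (r i)
        ≤ expDisc γ P (jointPi θ) ρ (r i) := hNE i x hxs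
    have hle' : expDisc γ P (jointPi (Function.update θ i (θ i + τ • dir))) ρ (r i)
        ≤ expDisc γ P (jointPi θ) ρ (r i) := by rw [← hx]; exact hle
    have hLsmul : Lmap γ P θ ρ (r i) i (τ • dir) = τ * Lmap γ P θ ρ (r i) i dir := by
      rw [map_smul, smul_eq_mul]
    have hBeq : C * ‖τ • dir‖ ^ 2 = C * τ ^ 2 * ‖dir‖ ^ 2 := by
      rw [norm_smul, Real.norm_eq_abs, abs_of_pos hτ0]
      ring
    have hub : τ * Lmap γ P θ ρ (r i) i dir ≤ C * τ ^ 2 * ‖dir‖ ^ 2 := by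
      have h1 := (abs_le.mp hq).1
      rw [hLsmul, hBeq] at h1
      linarith [hle']
    have hL1 : Lmap γ P θ ρ (r i) i dir ≤ C * τ * ‖dir‖ ^ 2 := by
      rw [← mul_le_mul_iff_right₀ hτ0]
      calc τ * Lmap γ P θ ρ (r i) i dir ≤ C * τ ^ 2 * ‖dir‖ ^ 2 := hub
        _ = τ * (C * τ * ‖dir‖ ^ 2) := by ring
    have hτε : τ ≤ ε / D := min_le_right _ _
    have hτD : τ * D ≤ ε := by
      rw [← le_div_iff₀ hD0]
      exact hτε
    have hfin : C * τ * ‖dir‖ ^ 2 ≤ ε := by nlinarith [hτ0.le, hC0, norm_nonneg dir]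
    linarith
  · -- first-order stationary → NE
    intro hst i θi' hθi'
    have hq_le : ∀ s0 b, qFun γ P θ (r i) i s0 b
        ≤ ∑ b', θ i s0 b' * qFun γ P θ (r i) i s0 b' := by
      intro s0 b
      set e : S → A i → ℝ := Function.update (θ i) s0 (fun b' => if b' = b then (1:ℝ) else 0)
        with he
      have hefeas : ∀ s, e s ∈ stdSimplex ℝ (A i) := by
        intro s
        by_cases hs : s = s0
        · subst hs
          rw [he, Function.update_self]
          constructor
          · intro b'
            dsimp only
            split <;> norm_num
          · simp
        · rw [he, Function.update_of_ne hs]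
          exact hθ i s
      have h1 := hst i e hefeas
      rw [hfd i, Lmap_apply] at h1
      have hsum : ∑ s, wFun γ P θ ρ s * ∑ b', (e - θ i) s b' * qFun γ P θ (r i) i s b'
          = wFun γ P θ ρ s0 *
            (qFun γ P θ (r i) i s0 b - ∑ b', θ i s0 b' * qFun γ P θ (r i) i s0 b') := by
        rw [Finset.sum_eq_single s0]
        · congr 1
          have h2 : ∀ b', (e - θ i) s0 b' = (if b' = b then (1:ℝ) else 0) - θ i s0 b' := by
            intro b'
            rw [he]
            simp [Function.update_self]
          rw [Finset.sum_congr rfl fun b' _ => by rw [h2 b', sub_mul]]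
          rw [Finset.sum_sub_distrib]
          congr 1
          rw [Finset.sum_congr rfl fun b' _ => by rw [ite_mul, one_mul, zero_mul]]
          rw [Finset.sum_ite_eq' Finset.univ b (fun b' => qFun γ P θ (r i) i s0 b')]
          simp
        · intro s _ hs
          have h3 : ∀ b', (e - θ i) s b' = 0 := by
            intro b'
            rw [he]
            simp [Function.update_of_ne hs]
          rw [Finset.sum_congr rfl fun b' _ => by rw [h3 b', zero_mul]]
          simp
        · intro hcon
          exact absurd (Finset.mem_univ s0) hcon
      rw [hsum] at h1
      nlinarith [hw s0]
    have hps : ∀ s, ∑ b, (θi' s b - θ i s b) * qFun γ P θ (r i) i s b ≤ 0 := by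
      intro s
      have h2 : ∑ b, θi' s b * qFun γ P θ (r i) i s b
          ≤ ∑ b', θ i s b' * qFun γ P θ (r i) i s b' := by
        calc ∑ b, θi' s b * qFun γ P θ (r i) i s b
            ≤ ∑ b, θi' s b * ∑ b', θ i s b' * qFun γ P θ (r i) i s b' := by
              refine Finset.sum_le_sum fun b _ => ?_
              exact mul_le_mul_of_nonneg_left (hq_le s b) ((hθi' s).1 b)
          _ = (∑ b, θi' s b) * ∑ b', θ i s b' * qFun γ P θ (r i) i s b' := by
              rw [Finset.sum_mul]
          _ = ∑ b', θ i s b' * qFun γ P θ (r i) i s b' := by rw [(hθi' s).2, one_mul]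
      have h3 : ∑ b, (θi' s b - θ i s b) * qFun γ P θ (r i) i s b
          = (∑ b, θi' s b * qFun γ P θ (r i) i s b)
            - ∑ b, θ i s b * qFun γ P θ (r i) i s b := by
        rw [← Finset.sum_sub_distrib]
        exact Finset.sum_congr rfl fun b _ => by ring
      rw [h3]
      linarith
    have hMx : ∀ s, ∑ b, |θi' s b| ≤ (1:ℝ) := by
      intro s
      rw [show ∑ b, |θi' s b| = ∑ b, θi' s b from
        Finset.sum_congr rfl fun b _ => abs_of_nonneg ((hθi' s).1 b)]
      exact le_of_eq (hθi' s).2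
    have hdf := diff_formula γ P θ ρ (r i) i hγ0 hγ1 hP hρ hθ θi' le_rfl hMx
      (by linarith : γ * 1 < 1)
    have hup : feasible (Function.update θ i θi') := update_feasible θ i hθ θi' hθi'
    have hdpos : ∀ t s, 0 ≤ stateDist P (jointPi (Function.update θ i θi')) ρ t s :=
      sd_nonneg P _ ρ hP hρ.1 (jointPi_nonneg _ hup)
    have hT : (∑' t : ℕ, γ ^ t * ∑ s, stateDist P (jointPi (Function.update θ i θi')) ρ t s *
        ∑ b, (θi' s b - θ i s b) * qFun γ P θ (r i) i s b) ≤ 0 := by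
      refine tsum_nonpos fun t => ?_
      refine mul_nonpos_iff.mpr (Or.inl ⟨pow_nonneg hγ0 t, ?_⟩)
      refine Finset.sum_nonpos fun s _ => ?_
      exact mul_nonpos_iff.mpr (Or.inl ⟨hdpos t s, hps s⟩)
    calc Jtot γ P ρ (Function.update θ i θi') (r i)
        = expDisc γ P (jointPi (Function.update θ i θi')) ρ (r i) := rfl
      _ = expDisc γ P (jointPi θ) ρ (r i)
          + ∑' t : ℕ, γ ^ t * ∑ s, stateDist P (jointPi (Function.update θ i θi')) ρ t s *
            ∑ b, (θi' s b - θ i s b) * qFun γ P θ (r i) i s b := hdf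
      _ ≤ expDisc γ P (jointPi θ) ρ (r i) := by linarith
      _ = Jtot γ P ρ θ (r i) := rfl
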